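/- Let 𝒴 ⊂ ℝ be a finite set, let 𝒜, 𝒢₁, ℬ₁, 𝒢₂ be finite types, let p be a strictly positive probability mass function on 𝒴 × 𝒜 × 𝒢₁ × ℬ₁ × 𝒢₂, and fix a ∈ 𝒜. If G₁ ⊥ (A, G₂) | B₁ under p, then for every g₂: ∑_{(y,a′,g₁,b₁)} p(y,a′,g₁,b₁ | g₂) · ( ψ_a^{B₁,G₂}(y,a′,b₁,g₂) − ψ_a^{(G₁,B₁),G₂}(y,a′,g₁,b₁,g₂) ) = 0; that is, the difference of the two influence functions has vanishing conditional expectation given G₂. -/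

import Mathlib

open Finset

noncomputable section

variable {Y : Finset ℝ} {A G₁ B₁ G₂ : Type}
variable [Fintype A] [Fintype G₁] [Fintype B₁] [Fintype G₂] [DecidableEq A]

/-- Marginal `p(g₁)`. -/
def pG1 (p : Y × A × G₁ × B₁ × G₂ → ℝ) (g₁ : G₁) : ℝ :=
  ∑ y : Y, ∑ a : A, ∑ b₁ : B₁, ∑ g₂ : G₂, p (y, a, g₁, b₁, g₂)

/-- Marginal `p(b₁)`. -/
def pB1 (p : Y × A × G₁ × B₁ × G₂ → ℝ) (b₁ : B₁) : ℝ :=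
  ∑ y : Y, ∑ a : A, ∑ g₁ : G₁, ∑ g₂ : G₂, p (y, a, g₁, b₁, g₂)

/-- Marginal `p(g₂)`. -/
def pG2 (p : Y × A × G₁ × B₁ × G₂ → ℝ) (g₂ : G₂) : ℝ :=
  ∑ y : Y, ∑ a : A, ∑ g₁ : G₁, ∑ b₁ : B₁, p (y, a, g₁, b₁, g₂)

/-- Marginal `p(g₁, b₁)`. -/
def pG1B1 (p : Y × A × G₁ × B₁ × G₂ → ℝ) (g₁ : G₁) (b₁ : B₁) : ℝ :=
  ∑ y : Y, ∑ a : A, ∑ g₂ : G₂, p (y, a, g₁, b₁, g₂)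

/-- Marginal `p(a, b₁, g₂)`. -/
def pAB1G2 (p : Y × A × G₁ × B₁ × G₂ → ℝ) (a : A) (b₁ : B₁) (g₂ : G₂) : ℝ :=
  ∑ y : Y, ∑ g₁ : G₁, p (y, a, g₁, b₁, g₂)

/-- Marginal `p(a, g₁, b₁, g₂)`. -/
def pAG1B1G2 (p : Y × A × G₁ × B₁ × G₂ → ℝ) (a : A) (g₁ : G₁) (b₁ : B₁) (g₂ : G₂) : ℝ :=
  ∑ y : Y, p (y, a, g₁, b₁, g₂)

/-- Marginal `p(a, g₁, g₂)`. -/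
def pAG1G2 (p : Y × A × G₁ × B₁ × G₂ → ℝ) (a : A) (g₁ : G₁) (g₂ : G₂) : ℝ :=
  ∑ y : Y, ∑ b₁ : B₁, p (y, a, g₁, b₁, g₂)

/-- Outcome regression `m_B(b₁,g₂) = ∑_y y·p(y | a, b₁, g₂)` for the
adjustment set `(B₁, G₂)`. -/
def mB (p : Y × A × G₁ × B₁ × G₂ → ℝ) (a : A) (b₁ : B₁) (g₂ : G₂) : ℝ :=
  ∑ y : Y, (y : ℝ) * ((∑ g₁ : G₁, p (y, a, g₁, b₁, g₂)) / pAB1G2 p a b₁ g₂)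

/-- Outcome regression `m_{GB}(g₁,b₁,g₂) = ∑_y y·p(y | a, g₁, b₁, g₂)` for
the adjustment set `((G₁, B₁), G₂)`. -/
def mGB (p : Y × A × G₁ × B₁ × G₂ → ℝ) (a : A) (g₁ : G₁) (b₁ : B₁) (g₂ : G₂) : ℝ :=
  ∑ y : Y, (y : ℝ) * (p (y, a, g₁, b₁, g₂) / pAG1B1G2 p a g₁ b₁ g₂)

/-- Outcome regression `m_{GG}(g₁,g₂) = ∑_y y·p(y | a, g₁, g₂)` for the
adjustment set `(G₁, G₂)`. -/
def mGG (p : Y × A × G₁ × B₁ × G₂ → ℝ) (a : A) (g₁ : G₁) (g₂ : G₂) : ℝ :=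
  ∑ y : Y, (y : ℝ) * ((∑ b₁ : B₁, p (y, a, g₁, b₁, g₂)) / pAG1G2 p a g₁ g₂)

/-- Target parameter for the adjustment set `(B₁, G₂)`. -/
def TB (p : Y × A × G₁ × B₁ × G₂ → ℝ) (a : A) : ℝ :=
  ∑ b₁ : B₁, pB1 p b₁ * ∑ g₂ : G₂, pG2 p g₂ * mB p a b₁ g₂

/-- Target parameter for the adjustment set `((G₁, B₁), G₂)`. -/
def TGB (p : Y × A × G₁ × B₁ × G₂ → ℝ) (a : A) : ℝ :=
  ∑ g₁ : G₁, ∑ b₁ : B₁, pG1B1 p g₁ b₁ * ∑ g₂ : G₂, pG2 p g₂ * mGB p a g₁ b₁ g₂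

/-- Target parameter for the adjustment set `(G₁, G₂)`. -/
def TGG (p : Y × A × G₁ × B₁ × G₂ → ℝ) (a : A) : ℝ :=
  ∑ g₁ : G₁, pG1 p g₁ * ∑ g₂ : G₂, pG2 p g₂ * mGG p a g₁ g₂

/-- Influence function `ψ_a^{B₁,G₂}` for the adjustment set `(B₁, G₂)`. -/
def psiB (p : Y × A × G₁ × B₁ × G₂ → ℝ) (a : A)
    (y : Y) (a' : A) (b₁ : B₁) (g₂ : G₂) : ℝ :=
  (if a' = a then (1 : ℝ) else 0) * (pB1 p b₁ * pG2 p g₂ / pAB1G2 p a b₁ g₂) *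
      ((y : ℝ) - mB p a b₁ g₂)
    + (∑ g₂' : G₂, pG2 p g₂' * mB p a b₁ g₂')
    + (∑ b₁' : B₁, pB1 p b₁' * mB p a b₁' g₂)
    - 2 * TB p a

/-- Influence function `ψ_a^{(G₁,B₁),G₂}` for the adjustment set `((G₁, B₁), G₂)`. -/
def psiGB (p : Y × A × G₁ × B₁ × G₂ → ℝ) (a : A)
    (y : Y) (a' : A) (g₁ : G₁) (b₁ : B₁) (g₂ : G₂) : ℝ :=
  (if a' = a then (1 : ℝ) else 0) *
      (pG1B1 p g₁ b₁ * pG2 p g₂ / pAG1B1G2 p a g₁ b₁ g₂) *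
      ((y : ℝ) - mGB p a g₁ b₁ g₂)
    + (∑ g₂' : G₂, pG2 p g₂' * mGB p a g₁ b₁ g₂')
    + (∑ g₁' : G₁, ∑ b₁' : B₁, pG1B1 p g₁' b₁' * mGB p a g₁' b₁' g₂)
    - 2 * TGB p a

/-- Influence function `ψ_a^{G₁,G₂}` for the adjustment set `(G₁, G₂)`. -/
def psiGG (p : Y × A × G₁ × B₁ × G₂ → ℝ) (a : A)
    (y : Y) (a' : A) (g₁ : G₁) (g₂ : G₂) : ℝ :=
  (if a' = a then (1 : ℝ) else 0) * (pG1 p g₁ * pG2 p g₂ / pAG1G2 p a g₁ g₂) *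
      ((y : ℝ) - mGG p a g₁ g₂)
    + (∑ g₂' : G₂, pG2 p g₂' * mGG p a g₁ g₂')
    + (∑ g₁' : G₁, pG1 p g₁' * mGG p a g₁' g₂)
    - 2 * TGG p a

/-- Conditional independence `G₁ ⊥ (A, G₂) | B₁` under `p`. -/
def CI_G1_AG2_B1 (p : Y × A × G₁ × B₁ × G₂ → ℝ) : Prop :=
  ∀ (g₁ : G₁) (a : A) (g₂ : G₂) (b₁ : B₁),
    (∑ y : Y, p (y, a, g₁, b₁, g₂)) / pB1 p b₁ =
      (pG1B1 p g₁ b₁ / pB1 p b₁) * (pAB1G2 p a b₁ g₂ / pB1 p b₁)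

/-- Conditional independence `Y ⊥ B₁ | (A, G₁, G₂)` under `p`. -/
def CI_Y_B1_AG1G2 (p : Y × A × G₁ × B₁ × G₂ → ℝ) : Prop :=
  ∀ (y : Y) (a : A) (g₁ : G₁) (b₁ : B₁) (g₂ : G₂),
    p (y, a, g₁, b₁, g₂) / pAG1G2 p a g₁ g₂ =
      ((∑ b₁' : B₁, p (y, a, g₁, b₁', g₂)) / pAG1G2 p a g₁ g₂) *
        (pAG1B1G2 p a g₁ b₁ g₂ / pAG1G2 p a g₁ g₂)

/-- Variance of a real function of the observation under `p`. -/
def VarP (p : Y × A × G₁ × B₁ × G₂ → ℝ) (f : Y × A × G₁ × B₁ × G₂ → ℝ) : ℝ :=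
  (∑ o : Y × A × G₁ × B₁ × G₂, p o * f o ^ 2) -
    (∑ o : Y × A × G₁ × B₁ × G₂, p o * f o) ^ 2


set_option linter.unusedSectionVars false in
lemma obs_nonempty' (p : Y × A × G₁ × B₁ × G₂ → ℝ) (hsum : ∑ o, p o = 1) :
    Nonempty (Y × A × G₁ × B₁ × G₂) := by
  by_contra h
  rw [not_nonempty_iff] at h
  rw [Finset.univ_eq_empty, Finset.sum_empty] at hsum
  norm_num at hsum

lemma pB1_pos (p : Y × A × G₁ × B₁ × G₂ → ℝ) (hpos : ∀ o, 0 < p o)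
    (hsum : ∑ o, p o = 1) (b₁ : B₁) : 0 < pB1 p b₁ := by
  obtain ⟨⟨y, a, g₁, b, g₂⟩⟩ := obs_nonempty' p hsum
  haveI : Nonempty Y := ⟨y⟩; haveI : Nonempty A := ⟨a⟩
  haveI : Nonempty G₁ := ⟨g₁⟩; haveI : Nonempty G₂ := ⟨g₂⟩
  unfold pB1
  repeat' first
    | exact hpos _
    | refine Finset.sum_pos (fun _ _ => ?_) Finset.univ_nonempty

lemma pAB1G2_pos (p : Y × A × G₁ × B₁ × G₂ → ℝ) (hpos : ∀ o, 0 < p o)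
    (hsum : ∑ o, p o = 1) (a : A) (b₁ : B₁) (g₂ : G₂) : 0 < pAB1G2 p a b₁ g₂ := by
  obtain ⟨⟨y, a0, g₁, b, g₂0⟩⟩ := obs_nonempty' p hsum
  haveI : Nonempty Y := ⟨y⟩; haveI : Nonempty G₁ := ⟨g₁⟩
  unfold pAB1G2
  repeat' first
    | exact hpos _
    | refine Finset.sum_pos (fun _ _ => ?_) Finset.univ_nonempty

lemma pAG1B1G2_pos (p : Y × A × G₁ × B₁ × G₂ → ℝ) (hpos : ∀ o, 0 < p o)
    (hsum : ∑ o, p o = 1) (a : A) (g₁ : G₁) (b₁ : B₁) (g₂ : G₂) :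
    0 < pAG1B1G2 p a g₁ b₁ g₂ := by
  obtain ⟨⟨y, a0, g₁0, b, g₂0⟩⟩ := obs_nonempty' p hsum
  haveI : Nonempty Y := ⟨y⟩
  unfold pAG1B1G2
  repeat' first
    | exact hpos _
    | refine Finset.sum_pos (fun _ _ => ?_) Finset.univ_nonempty

lemma hkey_lem (p : Y × A × G₁ × B₁ × G₂ → ℝ) (hpos : ∀ o, 0 < p o)
    (hsum : ∑ o, p o = 1) (hCI : CI_G1_AG2_B1 p)
    (a : A) (g₁ : G₁) (b₁ : B₁) (g₂ : G₂) :
    pAG1B1G2 p a g₁ b₁ g₂ * pB1 p b₁ = pG1B1 p g₁ b₁ * pAB1G2 p a b₁ g₂ := by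
  have hb := pB1_pos p hpos hsum b₁
  have h := hCI g₁ a g₂ b₁
  have h2 : pAG1B1G2 p a g₁ b₁ g₂ / pB1 p b₁ =
      (pG1B1 p g₁ b₁ / pB1 p b₁) * (pAB1G2 p a b₁ g₂ / pB1 p b₁) := h
  field_simp at h2
  exact mul_right_cancel₀ hb.ne' (by rw [h2])

lemma mB_mul (p : Y × A × G₁ × B₁ × G₂ → ℝ) (hpos : ∀ o, 0 < p o)
    (hsum : ∑ o, p o = 1) (a : A) (b₁ : B₁) (g₂ : G₂) :
    mB p a b₁ g₂ * pAB1G2 p a b₁ g₂ =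
      ∑ y : Y, (y : ℝ) * ∑ g₁ : G₁, p (y, a, g₁, b₁, g₂) := by
  have hP := pAB1G2_pos p hpos hsum a b₁ g₂
  unfold mB
  rw [Finset.sum_mul]
  refine Finset.sum_congr rfl fun y _ => ?_
  rw [mul_assoc, div_mul_cancel₀ _ hP.ne']

lemma mGB_mul (p : Y × A × G₁ × B₁ × G₂ → ℝ) (hpos : ∀ o, 0 < p o)
    (hsum : ∑ o, p o = 1) (a : A) (g₁ : G₁) (b₁ : B₁) (g₂ : G₂) :
    mGB p a g₁ b₁ g₂ * pAG1B1G2 p a g₁ b₁ g₂ =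
      ∑ y : Y, (y : ℝ) * p (y, a, g₁, b₁, g₂) := by
  have hP := pAG1B1G2_pos p hpos hsum a g₁ b₁ g₂
  unfold mGB
  rw [Finset.sum_mul]
  refine Finset.sum_congr rfl fun y _ => ?_
  rw [mul_assoc, div_mul_cancel₀ _ hP.ne']

lemma hmB_lem (p : Y × A × G₁ × B₁ × G₂ → ℝ) (hpos : ∀ o, 0 < p o)
    (hsum : ∑ o, p o = 1) (hCI : CI_G1_AG2_B1 p) (a : A) (b₁ : B₁) (g₂ : G₂) :
    pB1 p b₁ * mB p a b₁ g₂ = ∑ g₁ : G₁, pG1B1 p g₁ b₁ * mGB p a g₁ b₁ g₂ := by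
  have hP := pAB1G2_pos p hpos hsum a b₁ g₂
  have hr : ∀ g₁ : G₁, pG1B1 p g₁ b₁ / pAG1B1G2 p a g₁ b₁ g₂ =
      pB1 p b₁ / pAB1G2 p a b₁ g₂ := by
    intro g₁
    have hQ := pAG1B1G2_pos p hpos hsum a g₁ b₁ g₂
    rw [div_eq_div_iff hQ.ne' hP.ne']
    linarith [hkey_lem p hpos hsum hCI a g₁ b₁ g₂]
  calc pB1 p b₁ * mB p a b₁ g₂
      = ∑ y : Y, ∑ g₁ : G₁,
          (y : ℝ) * p (y, a, g₁, b₁, g₂) * (pB1 p b₁ / pAB1G2 p a b₁ g₂) := by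
        unfold mB
        rw [Finset.mul_sum]
        refine Finset.sum_congr rfl fun y _ => ?_
        rw [Finset.sum_div, Finset.mul_sum, Finset.mul_sum]
        refine Finset.sum_congr rfl fun g₁ _ => ?_
        ring
    _ = ∑ g₁ : G₁, ∑ y : Y,
          (y : ℝ) * p (y, a, g₁, b₁, g₂) * (pB1 p b₁ / pAB1G2 p a b₁ g₂) :=
        Finset.sum_comm
    _ = ∑ g₁ : G₁, pG1B1 p g₁ b₁ * mGB p a g₁ b₁ g₂ := by
        refine Finset.sum_congr rfl fun g₁ _ => ?_
        rw [← hr g₁]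
        unfold mGB
        rw [Finset.mul_sum]
        refine Finset.sum_congr rfl fun y _ => ?_
        have hQ := pAG1B1G2_pos p hpos hsum a g₁ b₁ g₂
        field_simp

set_option linter.unusedSectionVars false in
lemma hGsum (p : Y × A × G₁ × B₁ × G₂ → ℝ) (b₁ : B₁) :
    ∑ g₁ : G₁, pG1B1 p g₁ b₁ = pB1 p b₁ := by
  unfold pG1B1 pB1
  rw [Finset.sum_comm]
  refine Finset.sum_congr rfl fun y _ => ?_
  rw [Finset.sum_comm]

lemma hthird_lem (p : Y × A × G₁ × B₁ × G₂ → ℝ) (hpos : ∀ o, 0 < p o)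
    (hsum : ∑ o, p o = 1) (hCI : CI_G1_AG2_B1 p) (a : A) (g₂ : G₂) :
    ∑ b₁ : B₁, pB1 p b₁ * mB p a b₁ g₂ =
      ∑ g₁ : G₁, ∑ b₁ : B₁, pG1B1 p g₁ b₁ * mGB p a g₁ b₁ g₂ := by
  rw [Finset.sum_comm]
  exact Finset.sum_congr rfl fun b₁ _ => hmB_lem p hpos hsum hCI a b₁ g₂

lemma hTB_lem (p : Y × A × G₁ × B₁ × G₂ → ℝ) (hpos : ∀ o, 0 < p o)
    (hsum : ∑ o, p o = 1) (hCI : CI_G1_AG2_B1 p) (a : A) :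
    TB p a = TGB p a := by
  unfold TB TGB
  rw [Finset.sum_comm]
  refine Finset.sum_congr rfl fun b₁ _ => ?_
  calc pB1 p b₁ * ∑ g₂ : G₂, pG2 p g₂ * mB p a b₁ g₂
      = ∑ g₂ : G₂, pG2 p g₂ * (pB1 p b₁ * mB p a b₁ g₂) := by
        rw [Finset.mul_sum]; exact Finset.sum_congr rfl fun _ _ => by ring
    _ = ∑ g₂ : G₂, pG2 p g₂ * ∑ g₁ : G₁, pG1B1 p g₁ b₁ * mGB p a g₁ b₁ g₂ := by
        exact Finset.sum_congr rfl fun g₂ _ => by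
          rw [hmB_lem p hpos hsum hCI a b₁ g₂]
    _ = ∑ g₁ : G₁, pG1B1 p g₁ b₁ * ∑ g₂ : G₂, pG2 p g₂ * mGB p a g₁ b₁ g₂ := by
        simp only [Finset.mul_sum]
        rw [Finset.sum_comm]
        exact Finset.sum_congr rfl fun g₁ _ =>
          Finset.sum_congr rfl fun g₂ _ => by ring
set_option linter.unusedSectionVars false in
lemma sum4_reorder (f : Y → A → G₁ → B₁ → ℝ) :
    ∑ y : Y, ∑ a' : A, ∑ g₁ : G₁, ∑ b₁ : B₁, f y a' g₁ b₁ =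
      ∑ b₁ : B₁, ∑ g₁ : G₁, ∑ y : Y, ∑ a' : A, f y a' g₁ b₁ := by
  calc ∑ y : Y, ∑ a' : A, ∑ g₁ : G₁, ∑ b₁ : B₁, f y a' g₁ b₁
      = ∑ y : Y, ∑ a' : A, ∑ b₁ : B₁, ∑ g₁ : G₁, f y a' g₁ b₁ :=
        Finset.sum_congr rfl fun y _ => Finset.sum_congr rfl fun a' _ => Finset.sum_comm
    _ = ∑ y : Y, ∑ b₁ : B₁, ∑ a' : A, ∑ g₁ : G₁, f y a' g₁ b₁ :=
        Finset.sum_congr rfl fun y _ => Finset.sum_comm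
    _ = ∑ b₁ : B₁, ∑ y : Y, ∑ a' : A, ∑ g₁ : G₁, f y a' g₁ b₁ := Finset.sum_comm
    _ = ∑ b₁ : B₁, ∑ y : Y, ∑ g₁ : G₁, ∑ a' : A, f y a' g₁ b₁ :=
        Finset.sum_congr rfl fun b₁ _ => Finset.sum_congr rfl fun y _ => Finset.sum_comm
    _ = ∑ b₁ : B₁, ∑ g₁ : G₁, ∑ y : Y, ∑ a' : A, f y a' g₁ b₁ :=
        Finset.sum_congr rfl fun b₁ _ => Finset.sum_comm

lemma S1_zero (p : Y × A × G₁ × B₁ × G₂ → ℝ) (hpos : ∀ o, 0 < p o)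
    (hsum : ∑ o, p o = 1) (a : A) (g₂ : G₂) :
    ∑ y : Y, ∑ g₁ : G₁, ∑ b₁ : B₁,
      p (y, a, g₁, b₁, g₂) *
        (pB1 p b₁ * pG2 p g₂ / pAB1G2 p a b₁ g₂ * ((y : ℝ) - mB p a b₁ g₂)) = 0 := by
  rw [show (∑ y : Y, ∑ g₁ : G₁, ∑ b₁ : B₁,
      p (y, a, g₁, b₁, g₂) *
        (pB1 p b₁ * pG2 p g₂ / pAB1G2 p a b₁ g₂ * ((y : ℝ) - mB p a b₁ g₂)))
      = ∑ b₁ : B₁, ∑ y : Y, ∑ g₁ : G₁,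
          p (y, a, g₁, b₁, g₂) *
            (pB1 p b₁ * pG2 p g₂ / pAB1G2 p a b₁ g₂ * ((y : ℝ) - mB p a b₁ g₂))
      from (Finset.sum_congr rfl fun y _ => Finset.sum_comm).trans Finset.sum_comm]
  refine Finset.sum_eq_zero fun b₁ _ => ?_
  have hy : ∀ y : Y, (∑ g₁ : G₁, p (y, a, g₁, b₁, g₂) *
        (pB1 p b₁ * pG2 p g₂ / pAB1G2 p a b₁ g₂ * ((y : ℝ) - mB p a b₁ g₂)))
      = (pB1 p b₁ * pG2 p g₂ / pAB1G2 p a b₁ g₂) *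
          ((y : ℝ) * (∑ g₁ : G₁, p (y, a, g₁, b₁, g₂))
            - mB p a b₁ g₂ * ∑ g₁ : G₁, p (y, a, g₁, b₁, g₂)) := by
    intro y
    rw [← Finset.sum_mul]
    ring
  simp only [hy]
  rw [← Finset.mul_sum, Finset.sum_sub_distrib, ← Finset.mul_sum,
    ← mB_mul p hpos hsum a b₁ g₂,
    show (∑ y : Y, ∑ g₁ : G₁, p (y, a, g₁, b₁, g₂)) = pAB1G2 p a b₁ g₂ from rfl,
    sub_self, mul_zero]

lemma S2_zero (p : Y × A × G₁ × B₁ × G₂ → ℝ) (hpos : ∀ o, 0 < p o)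
    (hsum : ∑ o, p o = 1) (a : A) (g₂ : G₂) :
    ∑ y : Y, ∑ g₁ : G₁, ∑ b₁ : B₁,
      p (y, a, g₁, b₁, g₂) *
        (pG1B1 p g₁ b₁ * pG2 p g₂ / pAG1B1G2 p a g₁ b₁ g₂ *
          ((y : ℝ) - mGB p a g₁ b₁ g₂)) = 0 := by
  rw [show (∑ y : Y, ∑ g₁ : G₁, ∑ b₁ : B₁,
      p (y, a, g₁, b₁, g₂) *
        (pG1B1 p g₁ b₁ * pG2 p g₂ / pAG1B1G2 p a g₁ b₁ g₂ *
          ((y : ℝ) - mGB p a g₁ b₁ g₂)))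
      = ∑ g₁ : G₁, ∑ b₁ : B₁, ∑ y : Y,
          p (y, a, g₁, b₁, g₂) *
            (pG1B1 p g₁ b₁ * pG2 p g₂ / pAG1B1G2 p a g₁ b₁ g₂ *
              ((y : ℝ) - mGB p a g₁ b₁ g₂))
      from Finset.sum_comm.trans (Finset.sum_congr rfl fun g₁ _ => Finset.sum_comm)]
  refine Finset.sum_eq_zero fun g₁ _ => Finset.sum_eq_zero fun b₁ _ => ?_
  have hy : ∀ y : Y, p (y, a, g₁, b₁, g₂) *
        (pG1B1 p g₁ b₁ * pG2 p g₂ / pAG1B1G2 p a g₁ b₁ g₂ *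
          ((y : ℝ) - mGB p a g₁ b₁ g₂))
      = (pG1B1 p g₁ b₁ * pG2 p g₂ / pAG1B1G2 p a g₁ b₁ g₂) *
          ((y : ℝ) * p (y, a, g₁, b₁, g₂)
            - mGB p a g₁ b₁ g₂ * p (y, a, g₁, b₁, g₂)) := fun y => by ring
  simp only [hy]
  rw [← Finset.mul_sum, Finset.sum_sub_distrib, ← Finset.mul_sum,
    ← mGB_mul p hpos hsum a g₁ b₁ g₂,
    show (∑ y : Y, p (y, a, g₁, b₁, g₂)) = pAG1B1G2 p a g₁ b₁ g₂ from rfl,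
    sub_self, mul_zero]

lemma S3_zero (p : Y × A × G₁ × B₁ × G₂ → ℝ) (hpos : ∀ o, 0 < p o)
    (hsum : ∑ o, p o = 1) (hCI : CI_G1_AG2_B1 p) (a : A) (g₂ : G₂) :
    ∑ y : Y, ∑ a' : A, ∑ g₁ : G₁, ∑ b₁ : B₁,
      p (y, a', g₁, b₁, g₂) *
        (∑ g₂' : G₂, pG2 p g₂' * (mB p a b₁ g₂' - mGB p a g₁ b₁ g₂')) = 0 := by
  rw [sum4_reorder]
  refine Finset.sum_eq_zero fun b₁ _ => ?_
  have hb := pB1_pos p hpos hsum b₁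
  -- the inner sum over g₁ vanishes when weighted by pG1B1
  have hFz : ∑ g₁ : G₁, pG1B1 p g₁ b₁ *
      (∑ g₂' : G₂, pG2 p g₂' * (mB p a b₁ g₂' - mGB p a g₁ b₁ g₂')) = 0 := by
    have hexp : ∀ g₁ : G₁, pG1B1 p g₁ b₁ *
        (∑ g₂' : G₂, pG2 p g₂' * (mB p a b₁ g₂' - mGB p a g₁ b₁ g₂'))
        = ∑ g₂' : G₂, pG2 p g₂' *
            (pG1B1 p g₁ b₁ * mB p a b₁ g₂' - pG1B1 p g₁ b₁ * mGB p a g₁ b₁ g₂') := by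
      intro g₁
      rw [Finset.mul_sum]
      exact Finset.sum_congr rfl fun _ _ => by ring
    simp only [hexp]
    rw [Finset.sum_comm]
    refine Finset.sum_eq_zero fun g₂' _ => ?_
    rw [← Finset.mul_sum, Finset.sum_sub_distrib, ← Finset.sum_mul, hGsum p b₁,
      hmB_lem p hpos hsum hCI a b₁ g₂', sub_self, mul_zero]
  have hq : ∀ g₁ : G₁, (∑ y : Y, ∑ a' : A, p (y, a', g₁, b₁, g₂)) =
      pG1B1 p g₁ b₁ * (∑ a' : A, pAB1G2 p a' b₁ g₂) / pB1 p b₁ := by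
    intro g₁
    rw [eq_div_iff hb.ne']
    have h1 : (∑ y : Y, ∑ a' : A, p (y, a', g₁, b₁, g₂)) =
        ∑ a' : A, pAG1B1G2 p a' g₁ b₁ g₂ := Finset.sum_comm
    rw [h1, Finset.sum_mul, Finset.mul_sum]
    exact Finset.sum_congr rfl fun a' _ => hkey_lem p hpos hsum hCI a' g₁ b₁ g₂
  have hpull : ∀ g₁ : G₁, (∑ y : Y, ∑ a' : A,
      p (y, a', g₁, b₁, g₂) *
        (∑ g₂' : G₂, pG2 p g₂' * (mB p a b₁ g₂' - mGB p a g₁ b₁ g₂')))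
      = (∑ y : Y, ∑ a' : A, p (y, a', g₁, b₁, g₂)) *
          (∑ g₂' : G₂, pG2 p g₂' * (mB p a b₁ g₂' - mGB p a g₁ b₁ g₂')) := by
    intro g₁
    rw [Finset.sum_mul]
    exact Finset.sum_congr rfl fun y _ => (Finset.sum_mul _ _ _).symm
  simp only [hpull]
  have : ∀ g₁ : G₁, (∑ y : Y, ∑ a' : A, p (y, a', g₁, b₁, g₂)) *
      (∑ g₂' : G₂, pG2 p g₂' * (mB p a b₁ g₂' - mGB p a g₁ b₁ g₂'))
      = ((∑ a' : A, pAB1G2 p a' b₁ g₂) / pB1 p b₁) *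
          (pG1B1 p g₁ b₁ *
            (∑ g₂' : G₂, pG2 p g₂' * (mB p a b₁ g₂' - mGB p a g₁ b₁ g₂'))) := by
    intro g₁
    rw [hq g₁]
    ring
  simp only [this]
  rw [← Finset.mul_sum, hFz, mul_zero]

/-- Second orthogonality condition in the proof of Lemma 4.3: given
`G₁ ⊥ (A, G₂) | B₁`, the difference of the two influence functions has
vanishing conditional expectation given `G₂`. -/
theorem psi_difference_condExp_G2
    (p : Y × A × G₁ × B₁ × G₂ → ℝ)
    (hpos : ∀ o, 0 < p o) (hsum : ∑ o, p o = 1) (a : A)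
    (hCI : CI_G1_AG2_B1 p) :
    ∀ g₂ : G₂,
      ∑ y : Y, ∑ a' : A, ∑ g₁ : G₁, ∑ b₁ : B₁,
        (p (y, a', g₁, b₁, g₂) / pG2 p g₂) *
          (psiB p a y a' b₁ g₂ - psiGB p a y a' g₁ b₁ g₂) = 0 := by
  intro g₂
  have hnum : ∑ y : Y, ∑ a' : A, ∑ g₁ : G₁, ∑ b₁ : B₁,
      p (y, a', g₁, b₁, g₂) *
        (psiB p a y a' b₁ g₂ - psiGB p a y a' g₁ b₁ g₂) = 0 := by
    have h3 := hthird_lem p hpos hsum hCI a g₂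
    have hT := hTB_lem p hpos hsum hCI a
    have hdiff : ∀ (y : Y) (a' : A) (g₁ : G₁) (b₁ : B₁),
        p (y, a', g₁, b₁, g₂) *
            (psiB p a y a' b₁ g₂ - psiGB p a y a' g₁ b₁ g₂) =
          (if a' = a then p (y, a', g₁, b₁, g₂) *
              (pB1 p b₁ * pG2 p g₂ / pAB1G2 p a b₁ g₂ *
                ((y : ℝ) - mB p a b₁ g₂)) else 0)
          - (if a' = a then p (y, a', g₁, b₁, g₂) *
              (pG1B1 p g₁ b₁ * pG2 p g₂ / pAG1B1G2 p a g₁ b₁ g₂ *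
                ((y : ℝ) - mGB p a g₁ b₁ g₂)) else 0)
          + p (y, a', g₁, b₁, g₂) *
              (∑ g₂' : G₂, pG2 p g₂' * (mB p a b₁ g₂' - mGB p a g₁ b₁ g₂')) := by
      intro y a' g₁ b₁
      have hsub : (∑ g₂' : G₂, pG2 p g₂' * (mB p a b₁ g₂' - mGB p a g₁ b₁ g₂')) =
          (∑ g₂' : G₂, pG2 p g₂' * mB p a b₁ g₂')
            - ∑ g₂' : G₂, pG2 p g₂' * mGB p a g₁ b₁ g₂' := by
        rw [← Finset.sum_sub_distrib]
        exact Finset.sum_congr rfl fun _ _ => by ring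
      rw [hsub]
      unfold psiB psiGB
      by_cases h : a' = a
      · simp only [if_pos h]
        linear_combination p (y, a', g₁, b₁, g₂) * h3 -
          2 * p (y, a', g₁, b₁, g₂) * hT
      · simp only [if_neg h]
        linear_combination p (y, a', g₁, b₁, g₂) * h3 -
          2 * p (y, a', g₁, b₁, g₂) * hT
    simp only [hdiff, Finset.sum_add_distrib, Finset.sum_sub_distrib,
      Finset.sum_ite_irrel, Finset.sum_const_zero, Finset.sum_ite_eq',
      Finset.mem_univ, if_true]
    rw [S1_zero p hpos hsum a g₂, S2_zero p hpos hsum a g₂,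
      S3_zero p hpos hsum hCI a g₂]
    ring
  calc ∑ y : Y, ∑ a' : A, ∑ g₁ : G₁, ∑ b₁ : B₁,
        (p (y, a', g₁, b₁, g₂) / pG2 p g₂) *
          (psiB p a y a' b₁ g₂ - psiGB p a y a' g₁ b₁ g₂)
      = (∑ y : Y, ∑ a' : A, ∑ g₁ : G₁, ∑ b₁ : B₁,
          p (y, a', g₁, b₁, g₂) *
            (psiB p a y a' b₁ g₂ - psiGB p a y a' g₁ b₁ g₂)) / pG2 p g₂ := by
        simp only [div_mul_eq_mul_div, ← Finset.sum_div]
    _ = 0 := by rw [hnum, zero_div]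

end
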